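/- Every finite simplicial complex 𝒮 with minimum degree δ(𝒮) ≥ 6 and nonempty vertex set satisfies |𝒮| > (13/4)·|V(𝒮)|. Moreover this constant is optimal: there is a simplicial complex 𝒮 with δ(𝒮) ≥ 6 and (|𝒮| - 1)/|V(𝒮)| = 13/4 (namely 𝒫([4]) with the top set and one 3-set removed). -/

import Mathlib

open Finset

namespace AlphaFive

def edg (S : Finset (Finset ℕ)) (x : ℕ) : Finset (Finset ℕ) :=
  S.filter (fun e => e.card = 2 ∧ x ∈ e)

def tri (S : Finset (Finset ℕ)) (x : ℕ) : Finset (Finset ℕ) :=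
  S.filter (fun e => e.card = 3 ∧ x ∈ e)

def Nbr (S : Finset (Finset ℕ)) (x : ℕ) : Finset ℕ :=
  (S.sup id).filter (fun y => y ≠ x ∧ ({x, y} : Finset ℕ) ∈ S)

def Deficient (S : Finset (Finset ℕ)) (x : ℕ) : Prop :=
  (edg S x).card = 3 ∧ (tri S x).card = 2

instance (S : Finset (Finset ℕ)) (x : ℕ) : Decidable (Deficient S x) := by
  unfold Deficient; infer_instance

variable {S : Finset (Finset ℕ)} {x : ℕ}

lemma x_not_mem_nbr : x ∉ Nbr S x := by simp [Nbr]

lemma face_subset (hdc : ∀ A ∈ S, ∀ B ⊆ A, B ∈ S) {F : Finset ℕ}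
    (hF : F ∈ S) (hx : x ∈ F) : F ⊆ insert x (Nbr S x) := by
  intro y hy
  rcases eq_or_ne y x with rfl | h
  · exact mem_insert_self _ _
  · have hpair : ({x, y} : Finset ℕ) ∈ S := by
      refine hdc F hF _ ?_
      intro z hz
      simp only [mem_insert, mem_singleton] at hz
      rcases hz with rfl | rfl <;> assumption
    have hyV : y ∈ S.sup id := (Finset.le_sup (f := id) hF) hy
    exact mem_insert_of_mem (by simp only [Nbr, mem_filter]; exact ⟨hyV, h, hpair⟩)

lemma card_nbr : (Nbr S x).card = (edg S x).card := by
  apply Finset.card_bij (fun y _ => ({x, y} : Finset ℕ))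
  · intro y hy
    simp only [Nbr, mem_filter] at hy
    exact mem_filter.mpr ⟨hy.2.2, card_pair (Ne.symm hy.2.1), mem_insert_self _ _⟩
  · intro a ha b hb h
    simp only [Nbr, mem_filter] at ha hb
    have : a ∈ ({x, b} : Finset ℕ) := by
      rw [← h]; exact mem_insert_of_mem (mem_singleton_self a)
    simp only [mem_insert, mem_singleton] at this
    rcases this with rfl | rfl
    · exact absurd rfl ha.2.1
    · rfl
  · intro e he
    simp only [edg, mem_filter] at he
    obtain ⟨heS, hcard, hxe⟩ := he
    have h1 : (e.erase x).card = 1 := by rw [card_erase_of_mem hxe, hcard]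
    obtain ⟨y, hy⟩ := card_eq_one.mp h1
    have hymem : y ∈ e.erase x := by rw [hy]; exact mem_singleton_self y
    have hyx : y ≠ x := (mem_erase.mp hymem).1
    have hye : y ∈ e := (mem_erase.mp hymem).2
    have heq : e = {x, y} := by
      rw [← insert_erase hxe, hy]
    refine ⟨y, ?_, heq.symm⟩
    simp only [Nbr, mem_filter]
    exact ⟨(Finset.le_sup (f := id) heS) hye, hyx, heq ▸ heS⟩


lemma star_card_le (hdc : ∀ A ∈ S, ∀ B ⊆ A, B ∈ S) :
    (S.filter (fun e => x ∈ e)).card ≤ 2 ^ (edg S x).card := by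
  rw [← card_nbr, ← card_powerset]
  apply card_le_card_of_injOn (fun F => F.erase x)
  · intro F hF
    rw [mem_coe, mem_filter] at hF
    rw [mem_coe, mem_powerset]
    intro y hy
    have h := face_subset hdc hF.1 hF.2 (mem_of_mem_erase hy)
    rcases mem_insert.mp h with rfl | h'
    · exact absurd rfl (mem_erase.mp hy).1
    · exact h'
  · intro a ha b hb h
    rw [mem_coe, mem_filter] at ha hb
    rw [← insert_erase ha.2, ← insert_erase hb.2]
    exact congrArg (insert x) h

lemma three_le_d (hdc : ∀ A ∈ S, ∀ B ⊆ A, B ∈ S)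
    (hdeg : 6 ≤ (S.filter (fun e => x ∈ e)).card) : 3 ≤ (edg S x).card := by
  by_contra h
  have h2 : (edg S x).card ≤ 2 := by omega
  have h3 := star_card_le (x := x) hdc
  have h4 : (2:ℕ) ^ (edg S x).card ≤ 2 ^ 2 := Nat.pow_le_pow_right (by norm_num) h2
  omega

lemma tri_zero (hdc : ∀ A ∈ S, ∀ B ⊆ A, B ∈ S) (h : (tri S x).card = 0) :
    (S.filter (fun e => x ∈ e)).card ≤ 1 + (edg S x).card := by
  have hsub : S.filter (fun e => x ∈ e) ⊆ insert {x} (edg S x) := by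
    intro F hF
    rw [mem_filter] at hF
    have h1 : 1 ≤ F.card := card_pos.mpr ⟨x, hF.2⟩
    rcases Nat.lt_or_ge F.card 3 with hlt | hge
    · have : F.card = 1 ∨ F.card = 2 := by omega
      rcases this with h1' | h2'
      · have : ({x} : Finset ℕ) = F :=
          eq_of_subset_of_card_le (singleton_subset_iff.mpr hF.2) (by simp [h1'])
        rw [← this]; exact mem_insert_self _ _
      · exact mem_insert_of_mem (mem_filter.mpr ⟨hF.1, h2', hF.2⟩)
    · exfalso
      have h2 : 2 ≤ (F.erase x).card := by
        rw [card_erase_of_mem hF.2]; omega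
      obtain ⟨P, hPsub, hPcard⟩ := Finset.exists_subset_card_eq h2
      have hT : insert x P ∈ S := by
        refine hdc F hF.1 _ (insert_subset hF.2 (hPsub.trans (erase_subset x F)))
      have hxP : x ∉ P := fun hxp => (mem_erase.mp (hPsub hxp)).1 rfl
      have : insert x P ∈ tri S x := by
        rw [tri, mem_filter]
        exact ⟨hT, by rw [card_insert_of_notMem hxP, hPcard], mem_insert_self _ _⟩
      rw [Finset.card_eq_zero] at h
      rw [h] at this
      exact notMem_empty _ this
  calc (S.filter (fun e => x ∈ e)).card ≤ (insert {x} (edg S x)).card := card_le_card hsub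
    _ ≤ 1 + (edg S x).card := by
        rw [Nat.add_comm]
        exact card_insert_le _ _

lemma bigface_tri (hdc : ∀ A ∈ S, ∀ B ⊆ A, B ∈ S) {F : Finset ℕ} (hF : F ∈ S) (hx : x ∈ F)
    (h4 : 4 ≤ F.card) (hd : (edg S x).card = 3) : 3 ≤ (tri S x).card := by
  have hNx : x ∉ Nbr S x := x_not_mem_nbr
  have hsub := face_subset hdc hF hx
  have hcard : (insert x (Nbr S x)).card = 4 := by
    rw [card_insert_of_notMem hNx, card_nbr, hd]
  have hFeq : F = insert x (Nbr S x) := eq_of_subset_of_card_le hsub (by omega)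
  have hle : ((Nbr S x).powersetCard 2).card ≤ (tri S x).card := by
    apply card_le_card_of_injOn (fun P => insert x P)
    · intro P hP
      rw [mem_coe, mem_powersetCard] at hP
      have hxP : x ∉ P := fun hxp => hNx (hP.1 hxp)
      refine mem_filter.mpr ⟨?_, by rw [card_insert_of_notMem hxP, hP.2], mem_insert_self _ _⟩
      exact hdc F hF _ (by rw [hFeq]; exact insert_subset_insert x hP.1)
    · intro a ha b hb h
      rw [mem_coe, mem_powersetCard] at ha hb
      have hxa : x ∉ a := fun k => hNx (ha.1 k)
      have hxb : x ∉ b := fun k => hNx (hb.1 k)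
      rw [← erase_insert hxa, ← erase_insert hxb]
      exact congrArg (fun s => Finset.erase s x) h
  rw [card_powersetCard, card_nbr, hd] at hle
  simpa using hle

lemma d3_t2 (hdc : ∀ A ∈ S, ∀ B ⊆ A, B ∈ S)
    (hdeg : 6 ≤ (S.filter (fun e => x ∈ e)).card)
    (hd : (edg S x).card = 3) : 2 ≤ (tri S x).card := by
  by_cases hbig : ∃ F ∈ S, x ∈ F ∧ 4 ≤ F.card
  · obtain ⟨F, h1, h2, h3⟩ := hbig
    have := bigface_tri hdc h1 h2 h3 hd
    omega
  · push_neg at hbig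
    have hsub : S.filter (fun e => x ∈ e) ⊆ insert {x} (edg S x ∪ tri S x) := by
      intro F hF
      rw [mem_filter] at hF
      have h1 : 1 ≤ F.card := card_pos.mpr ⟨x, hF.2⟩
      have h4 : F.card < 4 := hbig F hF.1 hF.2
      have : F.card = 1 ∨ F.card = 2 ∨ F.card = 3 := by omega
      rcases this with h' | h' | h'
      · have : ({x} : Finset ℕ) = F :=
          eq_of_subset_of_card_le (singleton_subset_iff.mpr hF.2) (by simp [h'])
        rw [← this]; exact mem_insert_self _ _
      · exact mem_insert_of_mem (mem_union_left _ (mem_filter.mpr ⟨hF.1, h', hF.2⟩))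
      · exact mem_insert_of_mem (mem_union_right _ (mem_filter.mpr ⟨hF.1, h', hF.2⟩))
    have hc := card_le_card hsub
    have hc2 := card_insert_le ({x} : Finset ℕ) (edg S x ∪ tri S x)
    have hc3 := card_union_le (edg S x) (tri S x)
    omega


lemma deficient_pair (hdc : ∀ A ∈ S, ∀ B ⊆ A, B ∈ S) (hdef : Deficient S x) :
    ∃ p, p ≠ x ∧ ∀ T ∈ S, T.card = 3 → x ∈ T → p ∈ T := by
  obtain ⟨A, B, hAB, hset⟩ := card_eq_two.mp hdef.2
  have hA : A ∈ tri S x := by rw [hset]; exact mem_insert_self _ _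
  have hB : B ∈ tri S x := by rw [hset]; exact mem_insert_of_mem (mem_singleton_self _)
  rw [tri, mem_filter] at hA hB
  have hU : A ∪ B ⊆ insert x (Nbr S x) :=
    union_subset (face_subset hdc hA.1 hA.2.2) (face_subset hdc hB.1 hB.2.2)
  have hUc : (A ∪ B).card ≤ 4 := by
    have h := card_le_card hU
    rwa [card_insert_of_notMem x_not_mem_nbr, card_nbr, hdef.1] at h
  have hcai := Finset.card_union_add_card_inter A B
  have hIc : 2 ≤ (A ∩ B).card := by
    have hA3 := hA.2.1; have hB3 := hB.2.1; omega
  have hIlt : (A ∩ B).card ≤ 2 := by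
    by_contra h
    have h3 : A.card ≤ (A ∩ B).card := by have := hA.2.1; omega
    have heq : A ∩ B = A := eq_of_subset_of_card_le inter_subset_left h3
    have : A ⊆ B := by rw [← heq]; exact inter_subset_right
    exact hAB (eq_of_subset_of_card_le this (by omega))
  have hI2 : (A ∩ B).card = 2 := le_antisymm hIlt hIc
  obtain ⟨u, v, huv, huvset⟩ := card_eq_two.mp hI2
  have hxI : x ∈ A ∩ B := mem_inter.mpr ⟨hA.2.2, hB.2.2⟩
  rw [huvset] at hxI
  simp only [mem_insert, mem_singleton] at hxI
  -- p is the other element of {u,v}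
  obtain ⟨p, hpx, hpI⟩ : ∃ p, p ≠ x ∧ p ∈ A ∩ B := by
    rcases hxI with rfl | rfl
    · exact ⟨v, fun h => huv h.symm, by rw [huvset]; exact mem_insert_of_mem (mem_singleton_self _)⟩
    · exact ⟨u, huv, by rw [huvset]; exact mem_insert_self _ _⟩
  refine ⟨p, hpx, ?_⟩
  intro T hT hT3 hxT
  have hTt : T ∈ tri S x := mem_filter.mpr ⟨hT, hT3, hxT⟩
  rw [hset] at hTt
  rcases mem_insert.mp hTt with rfl | hTt
  · exact (mem_inter.mp hpI).1
  · rw [mem_singleton] at hTt; subst hTt; exact (mem_inter.mp hpI).2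

lemma def_sym (hx : Deficient S x) (hy : Deficient S y)
    (h : ∀ T ∈ S, T.card = 3 → x ∈ T → y ∈ T) :
    ∀ T ∈ S, T.card = 3 → y ∈ T → x ∈ T := by
  have hsub : tri S x ⊆ tri S y := by
    intro T hT
    rw [tri, mem_filter] at hT ⊢
    exact ⟨hT.1, hT.2.1, h T hT.1 hT.2.1 hT.2.2⟩
  have heq : tri S x = tri S y :=
    eq_of_subset_of_card_le hsub (by rw [hx.2, hy.2])
  intro T hT h3 hyT
  have : T ∈ tri S x := by rw [heq]; exact mem_filter.mpr ⟨hT, h3, hyT⟩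
  exact ((mem_filter.mp this).2).2

lemma def_notwo {a b : ℕ} (hdef : Deficient S x) (hab : a ≠ b) (hax : a ≠ x) (hbx : b ≠ x)
    (ha : ∀ T ∈ S, T.card = 3 → x ∈ T → a ∈ T)
    (hb : ∀ T ∈ S, T.card = 3 → x ∈ T → b ∈ T) : False := by
  obtain ⟨A, B, hAB, hset⟩ := card_eq_two.mp hdef.2
  have hA : A ∈ tri S x := by rw [hset]; exact mem_insert_self _ _
  have hB : B ∈ tri S x := by rw [hset]; exact mem_insert_of_mem (mem_singleton_self _)
  rw [tri, mem_filter] at hA hB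
  have hcard : ({x, a, b} : Finset ℕ).card = 3 := by
    rw [card_insert_of_notMem (by simp [Ne.symm hax, Ne.symm hbx]),
      card_insert_of_notMem (by simp [hab]), card_singleton]
  have key : ∀ T ∈ S, T.card = 3 → x ∈ T → T = {x, a, b} := by
    intro T hT h3 hxT
    refine (eq_of_subset_of_card_le ?_ (by omega)).symm
    intro w hw
    simp only [mem_insert, mem_singleton] at hw
    rcases hw with rfl | rfl | rfl
    · exact hxT
    · exact ha T hT h3 hxT
    · exact hb T hT h3 hxT
  have h1 := key A hA.1 hA.2.1 hA.2.2
  have h2 := key B hB.1 hB.2.1 hB.2.2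
  exact hAB (h1.trans h2.symm)

lemma aux_tri (hdc : ∀ A ∈ S, ∀ B ⊆ A, B ∈ S) (hxy : x ≠ y) (hxz : x ≠ z) (hyz : y ≠ z)
    (hx : Deficient S x) (hy : Deficient S y) (hz : Deficient S z)
    (hT : ({x, y, z} : Finset ℕ) ∈ S) (hc : ({x, y, z} : Finset ℕ).card = 3)
    (hCxy : ∀ T ∈ S, T.card = 3 → x ∈ T → y ∈ T) : False := by
  have hCyx := def_sym hx hy hCxy
  obtain ⟨q, hqz, hq⟩ := deficient_pair hdc hz
  have hqT : q ∈ ({x, y, z} : Finset ℕ) := hq _ hT hc (by simp)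
  simp only [mem_insert, mem_singleton] at hqT
  rcases hqT with h | h | h
  · -- q = x : C z x holds, so C x z
    subst h
    have hCxz := def_sym hz hx hq
    exact def_notwo hx hyz (Ne.symm hxy) (Ne.symm hxz) hCxy hCxz
  · -- q = y : C z y, so C y z; also C y x
    subst h
    have hCyz := def_sym hz hy hq
    exact def_notwo hy hxz hxy (Ne.symm hyz) hCyx hCyz
  · exact absurd h hqz

lemma no_def_triangle (hdc : ∀ A ∈ S, ∀ B ⊆ A, B ∈ S) {T : Finset ℕ}
    (hT : T ∈ S) (h3 : T.card = 3) : ¬ (∀ v ∈ T, Deficient S v) := by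
  intro hall
  obtain ⟨x, y, z, hxy, hxz, hyz, rfl⟩ := card_eq_three.mp h3
  have hx : Deficient S x := hall x (by simp)
  have hy : Deficient S y := hall y (by simp)
  have hz : Deficient S z := hall z (by simp)
  obtain ⟨p, hpx, hp⟩ := deficient_pair hdc hx
  have hpT : p ∈ ({x, y, z} : Finset ℕ) := hp _ hT h3 (by simp)
  simp only [mem_insert, mem_singleton] at hpT
  rcases hpT with h | h | h
  · exact absurd h hpx
  · subst h
    exact aux_tri hdc hxy hxz hyz hx hy hz hT h3 hp
  · rw [h] at hp
    have hperm : ({x, z, y} : Finset ℕ) = {x, y, z} := by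
      ext a; simp only [mem_insert, mem_singleton]; tauto
    exact aux_tri hdc hxz hxy (Ne.symm hyz) hx hz hy (hperm ▸ hT) (hperm ▸ h3) hp


lemma double_count (V : Finset ℕ) (F : Finset (Finset ℕ)) (w : ℕ → ℕ)
    (hF : ∀ e ∈ F, e ⊆ V) :
    ∑ x ∈ V, w x * (F.filter (fun e => x ∈ e)).card = ∑ e ∈ F, ∑ x ∈ e, w x := by
  have h1 : ∀ x, w x * (F.filter (fun e => x ∈ e)).card
      = ∑ e ∈ F, if x ∈ e then w x else 0 := by
    intro x
    rw [card_filter, mul_sum]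
    refine sum_congr rfl fun e _ => ?_
    split <;> simp
  simp_rw [h1]
  rw [sum_comm]
  refine sum_congr rfl fun e he => ?_
  rw [← sum_filter]
  have : V.filter (fun x => x ∈ e) = e := by
    rw [filter_mem_eq_inter, inter_eq_right.mpr (hF e he)]
  rw [this]

lemma card_singletons {S : Finset (Finset ℕ)} (hdc : ∀ A ∈ S, ∀ B ⊆ A, B ∈ S) :
    (S.sup id).card ≤ (S.filter (fun e => e.card = 1)).card := by
  apply card_le_card_of_injOn (fun x => ({x} : Finset ℕ))
  · intro x hx
    rw [mem_coe, Finset.mem_sup] at hx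
    obtain ⟨e, he, hxe⟩ := hx
    exact mem_filter.mpr ⟨hdc e he {x} (singleton_subset_iff.mpr hxe), card_singleton x⟩
  · intro a _ b _ h
    exact singleton_injective h

lemma card_lower {S : Finset (Finset ℕ)} (hne : S.Nonempty)
    (hdc : ∀ A ∈ S, ∀ B ⊆ A, B ∈ S) :
    1 + (S.sup id).card + (S.filter (fun e => e.card = 2)).card
      + (S.filter (fun e => e.card = 3)).card ≤ S.card := by
  classical
  set f0 := S.filter (fun e => e.card = 0)
  set f1 := S.filter (fun e => e.card = 1)
  set f2 := S.filter (fun e => e.card = 2)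
  set f3 := S.filter (fun e => e.card = 3)
  have h0 : 1 ≤ f0.card := by
    obtain ⟨A, hA⟩ := hne
    have : (∅ : Finset ℕ) ∈ f0 := mem_filter.mpr ⟨hdc A hA ∅ (empty_subset A), card_empty⟩
    exact card_pos.mpr ⟨∅, this⟩
  have h1 : (S.sup id).card ≤ f1.card := card_singletons hdc
  have dis : ∀ (i j : ℕ), i ≠ j →
      Disjoint (S.filter (fun e => e.card = i)) (S.filter (fun e => e.card = j)) := by
    intro i j hij
    rw [disjoint_left]
    intro a ha hb
    rw [mem_filter] at ha hb
    omega
  have hsub : f0 ∪ f1 ∪ f2 ∪ f3 ⊆ S := by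
    intro e he
    simp only [f0, f1, f2, f3, mem_union, mem_filter] at he
    tauto
  have hcard : (f0 ∪ f1 ∪ f2 ∪ f3).card = f0.card + f1.card + f2.card + f3.card := by
    rw [card_union_of_disjoint, card_union_of_disjoint, card_union_of_disjoint]
    · exact dis 0 1 (by norm_num)
    · rw [disjoint_union_left]
      exact ⟨dis 0 2 (by norm_num), dis 1 2 (by norm_num)⟩
    · rw [disjoint_union_left, disjoint_union_left]
      exact ⟨⟨dis 0 3 (by norm_num), dis 1 3 (by norm_num)⟩, dis 2 3 (by norm_num)⟩
  have := card_le_card hsub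
  omega


theorem part1 (S : Finset (Finset ℕ)) (hne : S.Nonempty)
    (hdc : ∀ A ∈ S, ∀ B ⊆ A, B ∈ S) (hV : (S.sup id).Nonempty)
    (hdeg : ∀ x ∈ S.sup id, 6 ≤ (S.filter (fun e => x ∈ e)).card) :
    (13 / 4 : ℚ) * ((S.sup id).card : ℚ) < (S.card : ℚ) := by
  classical
  set V := S.sup id with hVdef
  set E := S.filter (fun e => e.card = 2) with hE
  set T := S.filter (fun e => e.card = 3) with hT
  set pay : ℕ → ℕ := fun v => if Deficient S v then 9 else 6 with hpay
  have hEsub : ∀ e ∈ E, e ⊆ V := by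
    intro e he
    exact Finset.le_sup (f := id) (mem_filter.mp he).1
  have hTsub : ∀ e ∈ T, e ⊆ V := by
    intro e he
    exact Finset.le_sup (f := id) (mem_filter.mp he).1
  have hedg : ∀ x : ℕ, edg S x = E.filter (fun e => x ∈ e) := by
    intro x; rw [hE, edg, filter_filter]
  have htri : ∀ x : ℕ, tri S x = T.filter (fun e => x ∈ e) := by
    intro x; rw [hT, tri, filter_filter]
  -- edge double count
  have hsumE : ∑ x ∈ V, 12 * (edg S x).card = 24 * E.card := by
    calc ∑ x ∈ V, 12 * (edg S x).card
        = ∑ x ∈ V, 12 * (E.filter (fun e => x ∈ e)).card := by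
          refine sum_congr rfl fun x _ => by rw [hedg]
      _ = ∑ e ∈ E, ∑ x ∈ e, 12 := double_count V E (fun _ => 12) hEsub
      _ = ∑ e ∈ E, 24 := by
          refine sum_congr rfl fun e he => ?_
          rw [sum_const, (mem_filter.mp he).2]; rfl
      _ = 24 * E.card := by rw [sum_const]; ring
  -- triangle double count with payments
  have hsumT : ∑ x ∈ V, pay x * (tri S x).card ≤ 24 * T.card := by
    have heq : ∑ x ∈ V, pay x * (tri S x).card = ∑ e ∈ T, ∑ x ∈ e, pay x := by
      calc ∑ x ∈ V, pay x * (tri S x).card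
          = ∑ x ∈ V, pay x * (T.filter (fun e => x ∈ e)).card := by
            refine sum_congr rfl fun x _ => by rw [htri]
        _ = ∑ e ∈ T, ∑ x ∈ e, pay x := double_count V T pay hTsub
    rw [heq]
    calc ∑ e ∈ T, ∑ x ∈ e, pay x ≤ ∑ e ∈ T, 24 := by
          refine sum_le_sum fun e he => ?_
          obtain ⟨heS, he3⟩ := mem_filter.mp he
          obtain ⟨a, b, c, hab, hac, hbc, rfl⟩ := card_eq_three.mp he3
          rw [sum_insert (by simp [hab, hac]), sum_insert (by simp [hbc]), sum_singleton]
          have hnot := no_def_triangle hdc heS he3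
          have hnot' : ¬(Deficient S a ∧ Deficient S b ∧ Deficient S c) := by
            intro ⟨h1, h2, h3⟩
            refine hnot fun v hv => ?_
            simp only [mem_insert, mem_singleton] at hv
            rcases hv with rfl | rfl | rfl <;> assumption
          simp only [hpay]
          split_ifs with g1 g2 g3 <;> try omega
          exact absurd ⟨g1, g2, g3⟩ hnot'
      _ = 24 * T.card := by rw [sum_const]; ring
  -- per-vertex bound
  have hvert : ∀ x ∈ V, 78 ≤ 24 + 12 * (edg S x).card + pay x * (tri S x).card := by
    intro x hx
    have hdeg6 := hdeg x hx
    have hd3 := three_le_d hdc hdeg6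
    by_cases hdef : Deficient S x
    · simp only [hpay, if_pos hdef]
      rw [hdef.1, hdef.2]
    · simp only [hpay, if_neg hdef]
      rcases Nat.lt_or_ge (edg S x).card 5 with h5 | h5
      · have : (edg S x).card = 3 ∨ (edg S x).card = 4 := by omega
        rcases this with h' | h'
        · have ht2 := d3_t2 hdc hdeg6 h'
          have hne2 : (tri S x).card ≠ 2 := fun h2 => hdef ⟨h', h2⟩
          omega
        · have hne0 : (tri S x).card ≠ 0 := by
            intro h0
            have := tri_zero hdc h0
            omega
          omega
      · omega
  -- combine
  have hbig : 78 * V.card ≤ 24 * V.card + 24 * E.card + 24 * T.card := by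
    have h1 : ∑ x ∈ V, (78 : ℕ) ≤ ∑ x ∈ V, (24 + 12 * (edg S x).card + pay x * (tri S x).card) :=
      sum_le_sum hvert
    rw [sum_const, smul_eq_mul] at h1
    have h2 : ∑ x ∈ V, (24 + 12 * (edg S x).card + pay x * (tri S x).card)
        = 24 * V.card + ∑ x ∈ V, 12 * (edg S x).card + ∑ x ∈ V, pay x * (tri S x).card := by
      rw [sum_add_distrib, sum_add_distrib, sum_const, smul_eq_mul, Nat.mul_comm]
    rw [h2, hsumE] at h1
    omega
  have hlow := card_lower hne hdc
  have hfinal : 78 * V.card + 24 ≤ 24 * S.card := by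
    rw [← hVdef, ← hE, ← hT] at hlow
    omega
  have hq : (78 * V.card + 24 : ℚ) ≤ 24 * S.card := by exact_mod_cast hfinal
  push_cast at hq ⊢
  linarith


def W : Finset (Finset ℕ) := (Finset.range 4).powerset \ {{0,1,2,3}, {1,2,3}}

theorem part2 : ∃ S : Finset (Finset ℕ), S.Nonempty ∧ (∀ A ∈ S, ∀ B ⊆ A, B ∈ S) ∧
    (S.sup id).Nonempty ∧
    (∀ x ∈ S.sup id, 6 ≤ (S.filter (fun e => x ∈ e)).card) ∧
    ((S.card : ℚ) - 1) / ((S.sup id).card : ℚ) = 13 / 4 := by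
  refine ⟨W, ?_, ?_, ?_, ?_, ?_⟩
  · exact ⟨∅, by decide⟩
  · have h : ∀ A ∈ W, ∀ B ∈ A.powerset, B ∈ W := by decide
    intro A hA B hB
    exact h A hA B (mem_powerset.mpr hB)
  · have h : W.sup id = {0,1,2,3} := by decide
    rw [h]; exact ⟨0, by decide⟩
  · have h : W.sup id = {0,1,2,3} := by decide
    rw [h]
    decide
  · have h : W.sup id = {0,1,2,3} := by decide
    have hc : W.card = 14 := by decide
    rw [h, hc]
    norm_num

end AlphaFive

theorem alpha_five :
    (∀ S : Finset (Finset ℕ), S.Nonempty → (∀ A ∈ S, ∀ B ⊆ A, B ∈ S) →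
      (S.sup id).Nonempty →
      (∀ x ∈ S.sup id, 6 ≤ (S.filter (fun e => x ∈ e)).card) →
      (13 / 4 : ℚ) * ((S.sup id).card : ℚ) < (S.card : ℚ)) ∧
    (∃ S : Finset (Finset ℕ), S.Nonempty ∧ (∀ A ∈ S, ∀ B ⊆ A, B ∈ S) ∧
      (S.sup id).Nonempty ∧
      (∀ x ∈ S.sup id, 6 ≤ (S.filter (fun e => x ∈ e)).card) ∧
      ((S.card : ℚ) - 1) / ((S.sup id).card : ℚ) = 13 / 4) :=
  ⟨AlphaFive.part1, AlphaFive.part2⟩
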